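/- Let m, d ∈ ℤ and F_m(X, Y) = X⁴ − mX³Y − 6X²Y² + mXY³ + Y⁴. If x', y' ∈ ℤ satisfy gcd(x', y') = 1, both x' and y' odd, and F_m(x', y') = d, then there exists an odd integer c with d = −4c, and the pair x = (x' + y')/2, y = (−x' + y')/2 consists of integers with gcd(x, y) = 1, exactly one of x, y even, and F_m(x, y) = c. -/

import Mathlib

open Polynomial

/-- The simplest quartic polynomial `X^4 - a*X^3 - 6*X^2 + a*X + 1`. -/
noncomputable def simplestQuartic {K : Type*} [Field K] (a : K) : K[X] :=
  X ^ 4 - C a * X ^ 3 - 6 * X ^ 2 + C a * X + 1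

/-- The splitting field of `p` over `K` inside a fixed algebraic closure of `K`. -/
noncomputable def splittingFieldIn (K : Type*) [Field K] (p : K[X]) :
    IntermediateField K (AlgebraicClosure K) :=
  IntermediateField.adjoin K (p.rootSet (AlgebraicClosure K))

/-- The binary quartic form `F_m(x, y) = x^4 - m*x^3*y - 6*x^2*y^2 + m*x*y^3 + y^4`. -/
def Fq (m x y : ℤ) : ℤ := x ^ 4 - m * x ^ 3 * y - 6 * x ^ 2 * y ^ 2 + m * x * y ^ 3 + y ^ 4

/-- `L_m`: the splitting field of the simplest quartic polynomial `f_m` over `ℚ`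
inside a fixed algebraic closure of `ℚ`. -/
noncomputable def Lq (m : ℤ) : IntermediateField ℚ (AlgebraicClosure ℚ) :=
  splittingFieldIn ℚ (simplestQuartic (m : ℚ))

lemma fq_odd_et (m p q : ℤ) : Odd (Fq m (2*p) (2*q+1)) :=
  ⟨4*q + 12*q^2 + 16*q^3 + 8*q^4 - 12*p^2 - 48*p^2*q - 48*p^2*q^2 + 8*p^4 + m*p
    + 6*m*p*q + 12*m*p*q^2 + 8*m*p*q^3 - 4*m*p^3 - 8*m*p^3*q, by unfold Fq; ring⟩

lemma fq_odd_te (m p q : ℤ) : Odd (Fq m (2*p+1) (2*q)) :=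
  ⟨-12*q^2 + 8*q^4 + 4*p - 48*p*q^2 + 12*p^2 - 48*p^2*q^2 + 16*p^3 + 8*p^4 - m*q
    + 4*m*q^3 - 6*m*p*q + 8*m*p*q^3 - 12*m*p^2*q - 8*m*p^3*q, by unfold Fq; ring⟩

theorem simplest_quartic_primitive_solution_transform_inverse
    (m d x' y' : ℤ) (hgcd : Int.gcd x' y' = 1) (hx : Odd x') (hy : Odd y')
    (hF : Fq m x' y' = d) :
    ∃ c : ℤ, Odd c ∧ d = -4 * c ∧
      Int.gcd ((x' + y') / 2) ((-x' + y') / 2) = 1 ∧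
      ((Even ((x' + y') / 2) ∧ Odd ((-x' + y') / 2)) ∨
        (Odd ((x' + y') / 2) ∧ Even ((-x' + y') / 2))) ∧
      Fq m ((x' + y') / 2) ((-x' + y') / 2) = c := by
  obtain ⟨a, ha⟩ := hx
  obtain ⟨b, hb⟩ := hy
  have h1 : (x' + y') / 2 = a + b + 1 := by omega
  have h2 : (-x' + y') / 2 = b - a := by omega
  refine ⟨Fq m (a + b + 1) (b - a), ?_, ?_, ?_, ?_, by rw [h1, h2]⟩
  · rcases Int.even_or_odd a with ⟨u, hu⟩ | ⟨u, hu⟩ <;>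
      rcases Int.even_or_odd b with ⟨v, hv⟩ | ⟨v, hv⟩
    · rw [show a + b + 1 = 2*(u+v)+1 by omega, show b - a = 2*(v-u) by omega]
      exact fq_odd_te m (u+v) (v-u)
    · rw [show a + b + 1 = 2*(u+v+1) by omega, show b - a = 2*(v-u)+1 by omega]
      exact fq_odd_et m (u+v+1) (v-u)
    · rw [show a + b + 1 = 2*(u+v+1) by omega, show b - a = 2*(v-u)-1+1-1 by omega,
        show 2*(v-u)-1+1-1 = 2*(v-u-1)+1 by ring]
      exact fq_odd_et m (u+v+1) (v-u-1)
    · rw [show a + b + 1 = 2*(u+v+1)+1 by omega, show b - a = 2*(v-u) by omega]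
      exact fq_odd_te m (u+v+1) (v-u)
  · rw [← hF]; simp only [Fq]; subst ha hb; ring
  · rw [h1, h2]
    set g := Int.gcd (a + b + 1) (b - a) with hg
    have hg1 : (g : ℤ) ∣ (a + b + 1) := Int.gcd_dvd_left _ _
    have hg2 : (g : ℤ) ∣ (b - a) := Int.gcd_dvd_right _ _
    have hx' : (g : ℤ) ∣ x' := by
      rw [ha, show 2*a+1 = (a+b+1) - (b-a) by ring]; exact dvd_sub hg1 hg2
    have hy' : (g : ℤ) ∣ y' := by
      rw [hb, show 2*b+1 = (a+b+1) + (b-a) by ring]; exact dvd_add hg1 hg2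
    have hone : (g : ℤ) ∣ 1 := by
      have := Int.dvd_coe_gcd hx' hy'
      rwa [hgcd] at this
    exact Nat.dvd_one.mp (by exact_mod_cast hone)
  · rw [h1, h2]
    rcases Int.even_or_odd a with ⟨u, hu⟩ | ⟨u, hu⟩ <;>
      rcases Int.even_or_odd b with ⟨v, hv⟩ | ⟨v, hv⟩
    · exact Or.inr ⟨⟨u + v, by omega⟩, ⟨v - u, by omega⟩⟩
    · exact Or.inl ⟨⟨u + v + 1, by omega⟩, ⟨v - u, by omega⟩⟩
    · exact Or.inl ⟨⟨u + v + 1, by omega⟩, ⟨v - u - 1, by omega⟩⟩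
    · exact Or.inr ⟨⟨u + v + 1, by omega⟩, ⟨v - u, by omega⟩⟩
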